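/- Let μ₁ be a probability measure on (0,∞) possessing a continuous Lebesgue density f₀ and satisfying ∫ y dμ₁(y) = 1, and let μ₂ be the probability measure on (0,∞) with Lebesgue density y ↦ y·f₀(y). Fix c > 0 and define for x > 0 the price function p(x) = x·μ₂((c/x, ∞)) − c·μ₁((c/x, ∞)). Then p is differentiable on (0,∞) and its derivative (the 'delta') is p'(x) = μ₂((c/x, ∞)) for every x > 0. -/

import Mathlib

open MeasureTheory Filter Set

/-- Auxiliary: for a measure given by a nonnegative density on `(0,∞)` with finite total mass,
the tail mass is the set integral of the density, and the density is integrable on tails. -/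
lemma aux_toReal (f : ℝ → ℝ) (hfc : ContinuousOn f (Set.Ioi 0))
    (hnn : ∀ y ∈ Set.Ioi (0:ℝ), 0 ≤ f y)
    {μ : Measure ℝ}
    (hμ : μ = (volume.restrict (Set.Ioi 0)).withDensity fun y => ENNReal.ofReal (f y))
    (hfin : μ (Set.Ioi 0) ≠ ⊤) {a : ℝ} (ha : 0 < a) :
    IntegrableOn f (Set.Ioi a) ∧ (μ (Set.Ioi a)).toReal = ∫ y in Set.Ioi a, f y := by
  have hsub : Set.Ioi a ⊆ Set.Ioi (0:ℝ) := Set.Ioi_subset_Ioi ha.le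
  have happly : ∀ b : ℝ, 0 < b →
      μ (Set.Ioi b) = ∫⁻ y in Set.Ioi b, ENNReal.ofReal (f y) ∂volume := by
    intro b hb
    rw [hμ, withDensity_apply _ measurableSet_Ioi, Measure.restrict_restrict measurableSet_Ioi,
      Set.inter_eq_left.mpr (Set.Ioi_subset_Ioi hb.le)]
  have h0 : μ (Set.Ioi 0) = ∫⁻ y in Set.Ioi 0, ENNReal.ofReal (f y) ∂volume := by
    rw [hμ, withDensity_apply _ measurableSet_Ioi, Measure.restrict_restrict measurableSet_Ioi,
      Set.inter_self]
  have hfin' : ∫⁻ y in Set.Ioi a, ENNReal.ofReal (f y) ∂volume ≠ ⊤ := by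
    refine ne_top_of_le_ne_top ?_ (lintegral_mono_set hsub)
    rw [← h0]; exact hfin
  have hmeas : AEStronglyMeasurable f (volume.restrict (Set.Ioi a)) :=
    (hfc.mono hsub).aestronglyMeasurable measurableSet_Ioi
  have hnn' : 0 ≤ᵐ[volume.restrict (Set.Ioi a)] f :=
    ae_restrict_of_forall_mem measurableSet_Ioi fun y hy => hnn y (hsub hy)
  have hint : IntegrableOn f (Set.Ioi a) := by
    refine ⟨hmeas, ?_⟩
    rw [hasFiniteIntegral_iff_ofReal hnn']
    exact hfin'.lt_top
  refine ⟨hint, ?_⟩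
  rw [happly a ha, integral_eq_lintegral_of_nonneg_ae hnn' hmeas]

/-- Auxiliary: derivative of the tail integral. -/
lemma aux_deriv (f : ℝ → ℝ) (hfc : ContinuousOn f (Set.Ioi 0))
    (hint : ∀ b : ℝ, 0 < b → IntegrableOn f (Set.Ioi b)) {a : ℝ} (ha : 0 < a) :
    HasDerivAt (fun u => ∫ y in Set.Ioi u, f y) (-f a) a := by
  set b := a / 2 with hbdef
  have hb : 0 < b := by positivity
  have hba : b < a := by
    rw [hbdef]; linarith
  have h1 : HasDerivAt (fun u => ∫ y in b..u, f y) (f a) a := by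
    refine intervalIntegral.integral_hasDerivAt_right ?_ ?_ ?_
    · rw [intervalIntegrable_iff]
      exact ((hint b hb).mono_set (by
        rw [Set.uIoc_of_le hba.le]; exact Set.Ioc_subset_Ioi_self))
    · exact ContinuousOn.stronglyMeasurableAtFilter isOpen_Ioi hfc a ha
    · exact hfc.continuousAt (isOpen_Ioi.mem_nhds ha)
  have h2 : HasDerivAt (fun u => (∫ y in Set.Ioi b, f y) - ∫ y in b..u, f y) (-f a) a := by
    exact ((hasDerivAt_const a (∫ y in Set.Ioi b, f y)).sub h1).congr_deriv (by ring)
  refine h2.congr_of_eventuallyEq ?_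
  filter_upwards [isOpen_Ioi.mem_nhds hba] with u hu
  have hu0 : 0 < u := hb.trans hu
  have hbu : b ≤ u := hu.le
  have hdisj : Disjoint (Set.Ioc b u) (Set.Ioi u) := by
    apply Set.disjoint_left.mpr
    intro y hy1 hy2
    exact absurd hy1.2 (not_le.mpr hy2)
  have hsplit : ∫ y in Set.Ioi b, f y
      = (∫ y in Set.Ioc b u, f y) + ∫ y in Set.Ioi u, f y := by
    rw [← Set.Ioc_union_Ioi_eq_Ioi hbu]
    exact setIntegral_union hdisj measurableSet_Ioi
      ((hint b hb).mono_set Set.Ioc_subset_Ioi_self) (hint u hu0)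
  rw [intervalIntegral.integral_of_le hbu]
  rw [hsplit]; ring

theorem statement3
    (f₀ : ℝ → ℝ) (hf₀c : ContinuousOn f₀ (Set.Ioi 0)) (hf₀nn : ∀ y, 0 ≤ f₀ y)
    (μ₁ μ₂ : Measure ℝ)
    (hμ₁ : μ₁ = (volume.restrict (Set.Ioi 0)).withDensity fun y => ENNReal.ofReal (f₀ y))
    [IsProbabilityMeasure μ₁]
    (hmean : ∫ y, y ∂μ₁ = 1)
    (hμ₂ : μ₂ = (volume.restrict (Set.Ioi 0)).withDensity fun y => ENNReal.ofReal (y * f₀ y))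
    (c : ℝ) (hc : 0 < c)
    (x : ℝ) (hx : 0 < x) :
    HasDerivAt
      (fun z => z * (μ₂ (Set.Ioi (c / z))).toReal - c * (μ₁ (Set.Ioi (c / z))).toReal)
      ((μ₂ (Set.Ioi (c / x))).toReal) x := by
  -- density of μ₂
  set g : ℝ → ℝ := fun y => y * f₀ y with hg
  have hgc : ContinuousOn g (Set.Ioi 0) := continuousOn_id.mul hf₀c
  have hgnn : ∀ y ∈ Set.Ioi (0:ℝ), 0 ≤ g y := fun y hy => mul_nonneg (le_of_lt hy) (hf₀nn y)
  -- μ₂ has finite total mass, using the mean hypothesis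
  have hidint : Integrable (fun y : ℝ => y) μ₁ := by
    by_contra h
    rw [integral_undef h] at hmean
    norm_num at hmean
  have hae : 0 ≤ᵐ[μ₁] fun y : ℝ => y := by
    have h1 : 0 ≤ᵐ[volume.restrict (Set.Ioi 0)] fun y : ℝ => y :=
      ae_restrict_of_forall_mem measurableSet_Ioi fun y hy => le_of_lt hy
    rw [hμ₁]
    exact (withDensity_absolutelyContinuous _ _).ae_le h1
  have hdensmeas : AEMeasurable (fun y => ENNReal.ofReal (f₀ y)) (volume.restrict (Set.Ioi 0)) :=
    ENNReal.measurable_ofReal.comp_aemeasurable (hf₀c.aemeasurable measurableSet_Ioi)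
  have hμ₂fin : μ₂ (Set.Ioi 0) ≠ ⊤ := by
    have h1 : ENNReal.ofReal (∫ y, y ∂μ₁) = ∫⁻ y, ENNReal.ofReal y ∂μ₁ :=
      ofReal_integral_eq_lintegral_ofReal hidint hae
    rw [hmean] at h1
    have h2 : ∫⁻ y, ENNReal.ofReal y ∂μ₁
        = ∫⁻ y in Set.Ioi 0, ENNReal.ofReal (f₀ y) * ENNReal.ofReal y ∂volume := by
      rw [hμ₁, lintegral_withDensity_eq_lintegral_mul₀ hdensmeas
        ENNReal.measurable_ofReal.aemeasurable]
      rfl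
    have h3 : ∫⁻ y in Set.Ioi 0, ENNReal.ofReal (f₀ y) * ENNReal.ofReal y ∂volume
        = ∫⁻ y in Set.Ioi 0, ENNReal.ofReal (y * f₀ y) ∂volume := by
      refine lintegral_congr fun y => ?_
      rw [mul_comm y (f₀ y), ENNReal.ofReal_mul (hf₀nn y)]
    have h4 : μ₂ (Set.Ioi 0) = ∫⁻ y in Set.Ioi 0, ENNReal.ofReal (y * f₀ y) ∂volume := by
      rw [hμ₂, withDensity_apply _ measurableSet_Ioi, Measure.restrict_restrict measurableSet_Ioi,
        Set.inter_self]
    rw [h4, ← h3, ← h2, ← h1]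
    exact ENNReal.ofReal_ne_top
  -- tail integrals and equalities
  have hμ₁fin : μ₁ (Set.Ioi 0) ≠ ⊤ := measure_ne_top μ₁ _
  have key₁ := fun (a : ℝ) (ha : 0 < a) =>
    aux_toReal f₀ hf₀c (fun y _ => hf₀nn y) hμ₁ hμ₁fin ha
  have key₂ := fun (a : ℝ) (ha : 0 < a) => aux_toReal g hgc hgnn hμ₂ hμ₂fin ha
  set a₀ : ℝ := c / x with ha₀def
  have ha₀ : 0 < a₀ := div_pos hc hx
  -- derivatives of tail integral functions
  have hd₁ : HasDerivAt (fun u => ∫ y in Set.Ioi u, f₀ y) (-f₀ a₀) a₀ :=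
    aux_deriv f₀ hf₀c (fun b hb => (key₁ b hb).1) ha₀
  have hd₂ : HasDerivAt (fun u => ∫ y in Set.Ioi u, g y) (-g a₀) a₀ :=
    aux_deriv g hgc (fun b hb => (key₂ b hb).1) ha₀
  -- derivative of z ↦ c / z
  have hA : HasDerivAt (fun z : ℝ => c / z) (-(c / x ^ 2)) x := by
    have h := (hasDerivAt_inv hx.ne').const_mul c
    have heq : (fun z : ℝ => c * z⁻¹) = fun z : ℝ => c / z := by
      funext z; rw [div_eq_mul_inv]
    rw [heq] at h
    exact h.congr_deriv (by ring)
  have hcomp₁ : HasDerivAt (fun z => ∫ y in Set.Ioi (c / z), f₀ y)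
      (f₀ a₀ * (c / x ^ 2)) x := by
    have := hd₁.comp x hA
    exact this.congr_deriv (by ring)
  have hcomp₂ : HasDerivAt (fun z => ∫ y in Set.Ioi (c / z), g y)
      (g a₀ * (c / x ^ 2)) x := by
    have := hd₂.comp x hA
    exact this.congr_deriv (by ring)
  have hG₂x : (∫ y in Set.Ioi a₀, g y) = (μ₂ (Set.Ioi (c / x))).toReal := ((key₂ a₀ ha₀).2).symm
  have hmain : HasDerivAt
      (fun z => z * (∫ y in Set.Ioi (c / z), g y) - c * ∫ y in Set.Ioi (c / z), f₀ y)
      ((μ₂ (Set.Ioi (c / x))).toReal) x := by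
    have h := ((hasDerivAt_id x).mul hcomp₂).sub (hcomp₁.const_mul c)
    refine h.congr_deriv ?_
    rw [← hG₂x]
    have : g a₀ = a₀ * f₀ a₀ := rfl
    rw [this, ha₀def]
    field_simp
    simp only [id]
    ring
  refine hmain.congr_of_eventuallyEq ?_
  filter_upwards [isOpen_Ioi.mem_nhds hx] with z hz
  have hcz : 0 < c / z := div_pos hc hz
  rw [(key₁ _ hcz).2, (key₂ _ hcz).2]
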